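/- Let (Ω, 𝒜) be a measurable space and ν a finite signed measure on it with Jordan decomposition ν = ν⁺ − ν⁻. If μ is a finite positive measure on (Ω, 𝒜) with ‖ν − μ‖ = ‖ν⁻‖, then μ = ν⁺; that is, ν⁺ is the unique positive measure at total-variation distance ‖ν⁻‖ from ν. -/

import Mathlib

open MeasureTheory Set
open scoped ENNReal

/-- Uniqueness of the minimizer for the index of lack of positivity: if a finite
positive measure `μ` satisfies `‖ν − μ‖ = ‖ν⁻‖`, then `μ = ν⁺`. -/
theorem lop_minimizer_unique {Ω : Type*} [MeasurableSpace Ω] (ν : SignedMeasure Ω)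
    (μ : Measure Ω) [IsFiniteMeasure μ]
    (h : (ν - μ.toSignedMeasure).totalVariation Set.univ =
      ν.toJordanDecomposition.negPart Set.univ) :
    μ = ν.toJordanDecomposition.posPart := by
  set p := ν.toJordanDecomposition.posPart with hp
  set n := ν.toJordanDecomposition.negPart with hn
  set σ := ν - μ.toSignedMeasure with hσdef
  set a := σ.toJordanDecomposition.posPart with ha
  set b := σ.toJordanDecomposition.negPart with hb
  -- key pointwise identity
  have hkey : ∀ A : Set Ω, MeasurableSet A →
      (a A).toReal - (b A).toReal = (p A).toReal - (n A).toReal - (μ A).toReal := by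
    intro A hA
    have h1 : σ A = (a A).toReal - (b A).toReal := by
      conv_lhs => rw [← σ.toSignedMeasure_toJordanDecomposition]
      rw [JordanDecomposition.toSignedMeasure, Measure.toSignedMeasure_sub_apply hA]
      rfl
    have h2 : ν A = (p A).toReal - (n A).toReal := by
      conv_lhs => rw [← ν.toSignedMeasure_toJordanDecomposition]
      rw [JordanDecomposition.toSignedMeasure, Measure.toSignedMeasure_sub_apply hA]
      rfl
    have h3 : σ A = ν A - (μ A).toReal := by
      rw [hσdef, VectorMeasure.sub_apply, Measure.toSignedMeasure_apply_measurable hA]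
      rfl
    rw [← h1, h3, h2]
  have hab : a univ + b univ = n univ := by
    rw [← h]; simp [SignedMeasure.totalVariation, Measure.add_apply]
    rfl
  -- Hahn set
  obtain ⟨S, hS, hpS, hnSc⟩ := ν.toJordanDecomposition.mutuallySingular
  set P := Sᶜ with hPdef
  have hP : MeasurableSet P := hS.compl
  have hnP : n P = 0 := hnSc
  have hpPc : p Pᶜ = 0 := by rw [hPdef, compl_compl]; exact hpS
  have hnPc : n Pᶜ = n univ := by
    have := measure_add_measure_compl (μ := n) hP
    rw [hnP, zero_add] at this; exact this
  -- total variation facts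
  have hbU_le : b univ ≤ n univ := le_trans le_add_self (le_of_eq hab)
  have hbPc_le : b Pᶜ ≤ b univ := measure_mono (subset_univ _)
  have hnfin : n univ ≠ ⊤ := measure_ne_top _ _
  have hbfin : b univ ≠ ⊤ := measure_ne_top _ _
  have hafin : a univ ≠ ⊤ := measure_ne_top _ _
  have hkeyPc := hkey Pᶜ hP.compl
  rw [hpPc, hnPc] at hkeyPc
  have hbPc_le' : (b Pᶜ).toReal ≤ (n univ).toReal :=
    ENNReal.toReal_mono hnfin (le_trans hbPc_le hbU_le)
  have haPc0 : (a Pᶜ).toReal = 0 := by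
    have := ENNReal.toReal_nonneg (a := μ Pᶜ)
    have := ENNReal.toReal_nonneg (a := a Pᶜ)
    simp only [ENNReal.toReal_zero] at hkeyPc
    linarith
  have hmuPc0 : (μ Pᶜ).toReal = 0 := by
    have := ENNReal.toReal_nonneg (a := μ Pᶜ)
    have := ENNReal.toReal_nonneg (a := a Pᶜ)
    simp only [ENNReal.toReal_zero] at hkeyPc
    linarith
  have hμPc : μ Pᶜ = 0 :=
    (ENNReal.toReal_eq_zero_iff _).mp hmuPc0 |>.resolve_right (measure_ne_top _ _)
  -- b Pᶜ = n univ (in toReal)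
  have hbPc_eq : (b Pᶜ).toReal = (n univ).toReal := by
    simp only [ENNReal.toReal_zero] at hkeyPc
    linarith
  -- a univ = 0
  have habR : (a univ).toReal + (b univ).toReal = (n univ).toReal := by
    rw [← ENNReal.toReal_add hafin hbfin, hab]
  have hbU_leR : (b Pᶜ).toReal ≤ (b univ).toReal := ENNReal.toReal_mono hbfin hbPc_le
  have haU0 : (a univ).toReal = 0 := by
    have h1 := ENNReal.toReal_nonneg (a := a univ)
    linarith
  have haU : a univ = 0 :=
    (ENNReal.toReal_eq_zero_iff _).mp haU0 |>.resolve_right hafin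
  have hbU_eq : (b univ).toReal = (n univ).toReal := by linarith
  -- b P = 0
  have hbP : b P = 0 := by
    have hsum := measure_add_measure_compl (μ := b) hP
    have : (b P).toReal + (b Pᶜ).toReal = (b univ).toReal := by
      rw [← ENNReal.toReal_add (measure_ne_top _ _) (measure_ne_top _ _), hsum]
    have hbP0 : (b P).toReal = 0 := by linarith
    exact (ENNReal.toReal_eq_zero_iff _).mp hbP0 |>.resolve_right (measure_ne_top _ _)
  -- conclude
  ext A hA
  have hμA : μ A = μ (A ∩ P) := by
    have := measure_inter_add_diff (μ := μ) A hP
    have hd : μ (A \ P) = 0 := measure_mono_null (fun x hx => hx.2) hμPc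
    rw [← this, hd, add_zero]
  have hpA : p A = p (A ∩ P) := by
    have := measure_inter_add_diff (μ := p) A hP
    have hd : p (A \ P) = 0 :=
      le_antisymm (le_trans (measure_mono (fun x hx => hx.2)) hpPc.le) zero_le
    rw [← this, hd, add_zero]
  have hAP : MeasurableSet (A ∩ P) := hA.inter hP
  have hk := hkey (A ∩ P) hAP
  have haAP : a (A ∩ P) = 0 :=
    le_antisymm (le_trans (measure_mono (subset_univ _)) haU.le) zero_le
  have hbAP : b (A ∩ P) = 0 :=
    le_antisymm (le_trans (measure_mono inter_subset_right) hbP.le) zero_le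
  have hnAP : n (A ∩ P) = 0 :=
    le_antisymm (le_trans (measure_mono inter_subset_right) hnP.le) zero_le
  rw [haAP, hbAP, hnAP] at hk
  simp only [ENNReal.toReal_zero, sub_zero, zero_sub, sub_self] at hk
  have : (μ (A ∩ P)).toReal = (p (A ∩ P)).toReal := by linarith
  rw [hμA, hpA]
  exact (ENNReal.toReal_eq_toReal_iff' (measure_ne_top _ _) (measure_ne_top _ _)).mp this
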